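/- arXiv:1509.01404 — 4 statements merged into one kernel-verified Lean document; each statement's English description precedes it below -/
import Mathlib

section
/- Let F(H) = (1/4)‖A − HHᵀ‖_F² with A symmetric. The partial derivative of F with respect to the entry H_{ij} equals H_{ij}³ + a_{ij}·H_{ij} + b_{ij}, where a_{ij} = ‖H_{i,:}‖² + ‖H_{:,j}‖² − 2H_{ij}² − A_{ii} and b_{ij} = H_{i,:}(HᵀH)_{:,j} − H_{:,j}ᵀA_{:,i} − H_{ij}³ − H_{ij}·a_{ij}. -/
open BigOperators Finset

/-- Partial derivative of F(H) = (1/4)‖A − HHᵀ‖_F² with respect to H_{ij}. -/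
theorem stmt2 {n r : ℕ} (A : Matrix (Fin n) (Fin n) ℝ) (hA : A.transpose = A)
    (H : Matrix (Fin n) (Fin r) ℝ) (i : Fin n) (j : Fin r)
    (a b : ℝ)
    (ha : a = (∑ m, (H i m) ^ 2) + (∑ k, (H k j) ^ 2) - 2 * (H i j) ^ 2 - A i i)
    (hb : b = (∑ m, H i m * (∑ k, H k m * H k j)) - (∑ k, H k j * A k i)
              - (H i j) ^ 3 - H i j * a) :
    HasDerivAt
      (fun t : ℝ =>
        (1 / 4 : ℝ) *
          ∑ k, ∑ l,
            (A k l -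
              ∑ m, (if k = i ∧ m = j then t else H k m) *
                   (if l = i ∧ m = j then t else H l m)) ^ 2)
      ((H i j) ^ 3 + a * H i j + b) (H i j) := by
  classical
  have hfac : ∀ (p : Prop) [Decidable p] (c x : ℝ),
      HasDerivAt (fun t : ℝ => if p then t else c) (if p then 1 else 0) x := by
    intro p _ c x
    by_cases h : p
    · simpa [h] using (hasDerivAt_id' x)
    · simpa [h] using (hasDerivAt_const x c)
  have hS : ∀ k l : Fin n, HasDerivAt
      (fun t : ℝ => ∑ m, (if k = i ∧ m = j then t else H k m) * (if l = i ∧ m = j then t else H l m))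
      (∑ m, ((if k = i ∧ m = j then (1:ℝ) else 0) * (if l = i ∧ m = j then H i j else H l m)
        + (if k = i ∧ m = j then H i j else H k m) * (if l = i ∧ m = j then (1:ℝ) else 0))) (H i j) :=
    fun k l => HasDerivAt.fun_sum fun m _ => (hfac _ _ _).mul (hfac _ _ _)
  have hF := HasDerivAt.const_mul (1/4 : ℝ)
    (HasDerivAt.fun_sum fun k (_ : k ∈ Finset.univ) =>
      HasDerivAt.fun_sum fun l (_ : l ∈ Finset.univ) =>
        ((hasDerivAt_const (H i j) (A k l)).fun_sub (hS k l)).fun_pow 2)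
  convert hF using 1
  · rfl
  · rfl
  have key : ∀ (k : Fin n) (m : Fin r), (if k = i ∧ m = j then H i j else H k m) = H k m := by
    intro k m; split_ifs with h
    · rw [h.1, h.2]
    · rfl
  simp only [key]
  have s1 : ∀ k l : Fin n,
      (∑ m, ((if k = i ∧ m = j then (1:ℝ) else 0) * H l m + H k m * (if l = i ∧ m = j then (1:ℝ) else 0)))
        = (if k = i then H l j else 0) + (if l = i then H k j else 0) := by
    intro k l
    rw [Finset.sum_add_distrib]
    congr 1
    · by_cases h : k = i <;> simp [h]
    · by_cases h : l = i <;> simp [h]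
  simp only [s1]
  have expand : ∀ k l : Fin n,
      ((2:ℕ):ℝ) * (A k l - ∑ m, H k m * H l m) ^ (2-1) *
          (0 - ((if k = i then H l j else 0) + (if l = i then H k j else 0)))
        = (if k = i then -2 * (A k l - ∑ m, H k m * H l m) * H l j else 0)
          + (if l = i then -2 * (A k l - ∑ m, H k m * H l m) * H k j else 0) := by
    intro k l
    by_cases h1 : k = i <;> by_cases h2 : l = i <;> simp [h1, h2] <;> ring
  rw [Finset.sum_congr rfl fun k _ => Finset.sum_congr rfl fun l _ => expand k l]
  simp only [Finset.sum_add_distrib]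
  have e1 : (∑ k : Fin n, ∑ l : Fin n, (if k = i then -2 * (A k l - ∑ m, H k m * H l m) * H l j else 0))
      = ∑ l : Fin n, -2 * (A i l - ∑ m, H i m * H l m) * H l j := by
    have pull : ∀ k : Fin n,
        (∑ l : Fin n, (if k = i then -2 * (A k l - ∑ m, H k m * H l m) * H l j else 0))
          = if k = i then ∑ l : Fin n, -2 * (A k l - ∑ m, H k m * H l m) * H l j else 0 := by
      intro k; split_ifs <;> simp
    simp only [pull]
    simp
  have e2 : (∑ k : Fin n, ∑ l : Fin n, (if l = i then -2 * (A k l - ∑ m, H k m * H l m) * H k j else 0))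
      = ∑ k : Fin n, -2 * (A k i - ∑ m, H k m * H i m) * H k j := by
    apply Finset.sum_congr rfl
    intro k _
    simp
  rw [e1, e2]
  have sym : (∑ l : Fin n, -2 * (A i l - ∑ m, H i m * H l m) * H l j)
      = ∑ k : Fin n, -2 * (A k i - ∑ m, H k m * H i m) * H k j := by
    apply Finset.sum_congr rfl
    intro k _
    have hAik : A i k = A k i := by
      conv_lhs => rw [← hA]
      rfl
    rw [hAik]
    congr 2
    · congr 1
      apply Finset.sum_congr rfl
      intro m _
      ring
  rw [sym, hb]
  have inner : ∀ k : Fin n, (∑ m, H i m * (H k m * H k j)) = (∑ m, H k m * H i m) * H k j := by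
    intro k
    rw [Finset.sum_mul]
    exact Finset.sum_congr rfl fun m _ => by ring
  have X : (∑ m, H i m * ∑ k, H k m * H k j) = ∑ k, (∑ m, H k m * H i m) * H k j := by
    simp only [Finset.mul_sum]
    rw [Finset.sum_comm]
    exact Finset.sum_congr rfl fun k _ => inner k
  rw [X]
  rw [show (∑ k : Fin n, H k j * A k i) = ∑ k : Fin n, A k i * H k j from
    Finset.sum_congr rfl fun k _ => mul_comm _ _]
  rw [← Finset.sum_sub_distrib]
  have : (∑ k : Fin n, -2 * (A k i - ∑ m, H k m * H i m) * H k j)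
      = 2 * ∑ k : Fin n, ((∑ m, H k m * H i m) * H k j - A k i * H k j) := by
    rw [Finset.mul_sum]
    exact Finset.sum_congr rfl fun k _ => by ring
  rw [this]
  ring
end

section
/- If A ∈ ℝ^{n×n} is symmetric and H₀ ∈ ℝ^{n×r} is scaled so that ‖A − H₀H₀ᵀ‖_F ≤ ‖A‖_F, then any matrix H ∈ ℝ^{n×r} with H ≥ 0 satisfying ‖A − HHᵀ‖_F ≤ ‖A − H₀H₀ᵀ‖_F has ‖H_{:,k}‖₂ ≤ √(2‖A‖_F) for every column k. -/
open BigOperators Finset Matrix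

noncomputable def frob4 {n m : ℕ} (X : Matrix (Fin n) (Fin m) ℝ) : ℝ :=
  Real.sqrt (∑ i, ∑ j, (X i j) ^ 2)

lemma frob4_nonneg {n m : ℕ} (X : Matrix (Fin n) (Fin m) ℝ) : 0 ≤ frob4 X :=
  Real.sqrt_nonneg _

lemma frob4_eq_norm {n m : ℕ} (X : Matrix (Fin n) (Fin m) ℝ) :
    frob4 X = ‖(WithLp.equiv 2 (Fin n × Fin m → ℝ)).symm (fun p => X p.1 p.2)‖ := by
  rw [EuclideanSpace.norm_eq, frob4]
  congr 1
  rw [Fintype.sum_prod_type]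
  refine Finset.sum_congr rfl fun i _ => Finset.sum_congr rfl fun j _ => ?_
  simp [Real.norm_eq_abs, sq_abs]

lemma frob4_triangle {n m : ℕ} (X Y : Matrix (Fin n) (Fin m) ℝ) :
    frob4 (X + Y) ≤ frob4 X + frob4 Y := by
  rw [frob4_eq_norm, frob4_eq_norm, frob4_eq_norm]
  have : (WithLp.equiv 2 (Fin n × Fin m → ℝ)).symm (fun p => (X + Y) p.1 p.2)
      = (WithLp.equiv 2 (Fin n × Fin m → ℝ)).symm (fun p => X p.1 p.2)
        + (WithLp.equiv 2 (Fin n × Fin m → ℝ)).symm (fun p => Y p.1 p.2) := by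
    rfl
  rw [this]
  exact norm_add_le _ _

lemma frob4_neg {n m : ℕ} (X : Matrix (Fin n) (Fin m) ℝ) : frob4 (-X) = frob4 X := by
  unfold frob4
  congr 1
  refine Finset.sum_congr rfl fun i _ => Finset.sum_congr rfl fun j _ => ?_
  simp

/-- If ‖A − H₀H₀ᵀ‖_F ≤ ‖A‖_F, then any nonnegative H with
    ‖A − HHᵀ‖_F ≤ ‖A − H₀H₀ᵀ‖_F has ‖H_{:,k}‖₂ ≤ √(2‖A‖_F) for every column k. -/
theorem stmt4 {n r : ℕ} (A : Matrix (Fin n) (Fin n) ℝ) (hA : A.transpose = A)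
    (H₀ H : Matrix (Fin n) (Fin r) ℝ)
    (hscale : frob4 (A - H₀ * H₀.transpose) ≤ frob4 A)
    (hHnn : ∀ i j, 0 ≤ H i j)
    (hH : frob4 (A - H * H.transpose) ≤ frob4 (A - H₀ * H₀.transpose)) :
    ∀ k : Fin r, Real.sqrt (∑ i, (H i k) ^ 2) ≤ Real.sqrt (2 * frob4 A) := by
  intro k
  -- Step 1: frob4 (H Hᵀ) ≤ 2 frob4 A
  have htri : frob4 (H * H.transpose) ≤ 2 * frob4 A := by
    have h1 : H * H.transpose = A + (-(A - H * H.transpose)) := by abel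
    calc frob4 (H * H.transpose) = frob4 (A + (-(A - H * H.transpose))) := by rw [← h1]
      _ ≤ frob4 A + frob4 (-(A - H * H.transpose)) := frob4_triangle _ _
      _ = frob4 A + frob4 (A - H * H.transpose) := by rw [frob4_neg]
      _ ≤ frob4 A + frob4 A := by linarith [hH.trans hscale]
      _ = 2 * frob4 A := by ring
  -- Step 2: ∑ i, (H i k)^2 ≤ frob4 (H Hᵀ)
  have hcol : (∑ i, (H i k) ^ 2) ≤ frob4 (H * H.transpose) := by
    have hsq : ((∑ i, (H i k) ^ 2)) ^ 2 ≤ ∑ i, ∑ j, ((H * H.transpose) i j) ^ 2 := by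
      have expand : ((∑ i, (H i k) ^ 2)) ^ 2 = ∑ i, ∑ j, (H i k * H j k) ^ 2 := by
        rw [sq, Finset.sum_mul_sum]
        refine Finset.sum_congr rfl fun i _ => Finset.sum_congr rfl fun j _ => ?_
        ring
      rw [expand]
      refine Finset.sum_le_sum fun i _ => Finset.sum_le_sum fun j _ => ?_
      have hterm : H i k * H j k ≤ (H * H.transpose) i j := by
        have : (H * H.transpose) i j = ∑ m, H i m * H j m := by
          simp [Matrix.mul_apply, Matrix.transpose_apply]
        rw [this]
        exact Finset.single_le_sum (fun m _ => mul_nonneg (hHnn i m) (hHnn j m))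
          (Finset.mem_univ k)
      exact pow_le_pow_left₀ (mul_nonneg (hHnn i k) (hHnn j k)) hterm 2
    have hnn : 0 ≤ ∑ i, (H i k) ^ 2 :=
      Finset.sum_nonneg fun i _ => sq_nonneg _
    calc (∑ i, (H i k) ^ 2) = Real.sqrt ((∑ i, (H i k) ^ 2) ^ 2) := by
          rw [Real.sqrt_sq hnn]
      _ ≤ Real.sqrt (∑ i, ∑ j, ((H * H.transpose) i j) ^ 2) := Real.sqrt_le_sqrt hsq
      _ = frob4 (H * H.transpose) := rfl
  exact Real.sqrt_le_sqrt (hcol.trans htri)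
end

section
/- Let F : ℝ^{n×r} → ℝ be continuously differentiable and let (H_{(k)}) be a sequence in the nonnegative orthant with F(H_{(k+1)}) ≤ F(H_{(k)}) for all k, such that the sequence converges to a limit H̄, and such that for each coordinate (i,j) there is a subsequence of indices at which the update exactly minimizes F over the single coordinate H_{ij} with all others fixed. If moreover at the limit there exists a coordinate (i,j) and p ≠ 0 with H̄ + p·E^{ij} ≥ 0 and F(H̄ + p·E^{ij}) < F(H̄), one derives a contradiction; hence H̄ is a stationary point of min_{H≥0} F(H). -/
open BigOperators Finset Filter

/-- Theorem 1: if a sequence of exact cyclic coordinate descent iterates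
    (nonincreasing in F, each coordinate exactly minimized along a subsequence)
    stays in the nonnegative orthant and converges to H̄, then H̄ is a
    stationary point of min_{H ≥ 0} F(H). -/
theorem stmt12 {n r : ℕ} (F : (Fin n → Fin r → ℝ) → ℝ) (hF : ContDiff ℝ 1 F)
    (Hs : ℕ → (Fin n → Fin r → ℝ)) (Hbar : Fin n → Fin r → ℝ)
    (hnonneg : ∀ k i j, 0 ≤ Hs k i j)
    (hmono : ∀ k, F (Hs (k + 1)) ≤ F (Hs k))
    (hconv : Tendsto Hs atTop (nhds Hbar))
    (hmin : ∀ i j, ∃ φ : ℕ → ℕ, StrictMono φ ∧ ∀ k (p : ℝ),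
        (∀ a b, 0 ≤ Hs (φ k) a b + (if a = i ∧ b = j then p else 0)) →
        F (Hs (φ k + 1)) ≤
          F (fun a b => Hs (φ k) a b + (if a = i ∧ b = j then p else 0))) :
    ∀ i j,
      (Hbar i j = 0 →
        0 ≤ fderiv ℝ F Hbar (fun a b => if a = i ∧ b = j then (1 : ℝ) else 0)) ∧
      (0 < Hbar i j →
        fderiv ℝ F Hbar (fun a b => if a = i ∧ b = j then (1 : ℝ) else 0) = 0) := by
  have hFc : Continuous F := hF.continuous
  -- F(Hs k) is antitone
  have hanti : Antitone (fun k => F (Hs k)) := antitone_nat_of_succ_le hmono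
  -- F(Hs k) → F Hbar
  have hFt : Tendsto (fun k => F (Hs k)) atTop (nhds (F Hbar)) :=
    (hFc.tendsto Hbar).comp hconv
  -- F Hbar is a lower bound
  have hlb : ∀ m, F Hbar ≤ F (Hs m) := by
    intro m
    refine le_of_tendsto hFt ?_
    filter_upwards [eventually_ge_atTop m] with k hk
    exact hanti hk
  intro i j
  obtain ⟨φ, hφ, hφmin⟩ := hmin i j
  -- the direction E and the perturbed points
  set E : Fin n → Fin r → ℝ := fun a b => if a = i ∧ b = j then (1 : ℝ) else 0 with hE
  set M : ℝ → (Fin n → Fin r → ℝ) := fun p => fun a b =>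
    Hbar a b + (if a = i ∧ b = j then p else 0) with hM
  have hM0 : M 0 = Hbar := by
    funext a b; simp [hM]
  have hMsmul : ∀ p, M p = fun a b => Hbar a b + p • E a b := by
    intro p; funext a b
    by_cases h : a = i ∧ b = j <;> simp [hM, hE, h]
  -- continuity of p ↦ M p
  have hMcont : Continuous M := by
    refine continuous_pi fun a => continuous_pi fun b => ?_
    by_cases h : a = i ∧ b = j <;> simp only [hM, h, if_pos, if_neg, not_false_iff]
    · exact continuous_const.add continuous_id
    · exact continuous_const.add continuous_const
  have hφconv : Tendsto (fun k => Hs (φ k)) atTop (nhds Hbar) :=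
    hconv.comp hφ.tendsto_atTop
  -- Key: F Hbar ≤ F (M p) for strictly feasible p
  have hkey' : ∀ p : ℝ, 0 < Hbar i j + p → F Hbar ≤ F (M p) := by
    intro p hp
    set G : ℕ → (Fin n → Fin r → ℝ) := fun k => fun a b =>
      Hs (φ k) a b + (if a = i ∧ b = j then (Hbar i j + p - Hs (φ k) i j) else 0) with hG
    have hGfeas : ∀ k a b, 0 ≤ Hs (φ k) a b +
        (if a = i ∧ b = j then (Hbar i j + p - Hs (φ k) i j) else 0) := by
      intro k a b
      by_cases h : a = i ∧ b = j
      · obtain ⟨rfl, rfl⟩ := h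
        simp only [eq_self_iff_true, and_self, if_true]
        linarith
      · simp only [if_neg h, add_zero]
        exact hnonneg _ _ _
    have hGge : ∀ k, F Hbar ≤ F (G k) := fun k =>
      le_trans (hlb (φ k + 1)) (hφmin k _ (hGfeas k))
    -- G k → M p
    have hGconv : Tendsto G atTop (nhds (M p)) := by
      refine tendsto_pi_nhds.2 fun a => tendsto_pi_nhds.2 fun b => ?_
      by_cases h : a = i ∧ b = j
      · obtain ⟨rfl, rfl⟩ := h
        have : (fun k => G k a b) = fun _ => Hbar a b + p := by
          funext k
          simp only [hG, eq_self_iff_true, and_self, if_true]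
          ring
        rw [this]
        have : M p a b = Hbar a b + p := by simp [hM]
        rw [this]
        exact tendsto_const_nhds
      · have h1 : (fun k => G k a b) = fun k => Hs (φ k) a b := by
          funext k; simp [hG, h]
        have h2 : M p a b = Hbar a b := by simp [hM, h]
        rw [h1, h2]
        exact tendsto_pi_nhds.1 (tendsto_pi_nhds.1 hφconv a) b
    exact ge_of_tendsto ((hFc.tendsto (M p)).comp hGconv) (Eventually.of_forall hGge)
  -- Extend to the boundary by continuity
  have hkey : ∀ p : ℝ, 0 ≤ Hbar i j + p → F Hbar ≤ F (M p) := by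
    intro p hp
    rcases lt_or_eq_of_le hp with h | h
    · exact hkey' p h
    · -- Hbar i j + p = 0; approximate
      have hseq : Tendsto (fun m : ℕ => p + 1 / (m + 1)) atTop (nhds p) := by
        have : Tendsto (fun m : ℕ => 1 / ((m : ℝ) + 1)) atTop (nhds 0) :=
          tendsto_one_div_add_atTop_nhds_zero_nat
        simpa using tendsto_const_nhds.add this
      have hFc2 : Tendsto (fun m : ℕ => F (M (p + 1 / (m + 1)))) atTop (nhds (F (M p))) :=
        ((hFc.comp hMcont).tendsto p).comp hseq
      refine ge_of_tendsto hFc2 (Eventually.of_forall fun m => ?_)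
      refine hkey' _ ?_
      have : (0:ℝ) < 1 / ((m : ℝ) + 1) := by positivity
      linarith
  -- Differentiability of g(t) = F (M t)
  have hd : HasDerivAt (fun t : ℝ => F (M t)) (fderiv ℝ F Hbar E) 0 := by
    have hpath : HasDerivAt (fun t : ℝ => M t) E 0 := by
      have h1 : HasDerivAt (fun t : ℝ => t • E) E 0 :=
        (hasDerivAt_id 0).smul_const E |>.congr_deriv (one_smul _ _)
      have h2 : HasDerivAt (fun t : ℝ => Hbar + t • E) E 0 := h1.const_add Hbar
      refine h2.congr_of_eventuallyEq (Eventually.of_forall fun t => ?_)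
      show M t = Hbar + t • E
      rw [hMsmul t]
      rfl
    have hFd : HasFDerivAt F (fderiv ℝ F Hbar) (M 0) := by
      rw [hM0]
      exact (hF.differentiable one_ne_zero Hbar).hasFDerivAt
    have := hFd.comp_hasDerivAt 0 hpath
    exact this
  constructor
  · -- boundary case : Hbar i j = 0
    intro hz
    have hmin0 : ∀ q ≥ (0:ℝ), F (M 0) ≤ F (M q) := by
      intro q hq
      rw [hM0]
      exact hkey q (by rw [hz]; simpa using hq)
    have h1 := hasDerivAt_iff_tendsto_slope.1 hd
    have h2 : Tendsto (slope (fun t : ℝ => F (M t)) 0)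
        (nhdsWithin 0 (Set.Ioi 0)) (nhds (fderiv ℝ F Hbar E)) :=
      h1.mono_left (nhdsWithin_mono _ fun x hx => ne_of_gt hx)
    refine ge_of_tendsto h2 ?_
    filter_upwards [self_mem_nhdsWithin] with x hx
    have hx' : (0:ℝ) < x := hx
    rw [slope_def_field]
    have := hmin0 x hx'.le
    simp only [sub_zero]
    exact div_nonneg (by linarith) hx'.le
  · -- interior case : 0 < Hbar i j
    intro hpos
    have hloc : IsLocalMin (fun t : ℝ => F (M t)) 0 := by
      have hmem : Set.Ioi (-(Hbar i j)) ∈ nhds (0:ℝ) :=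
        Ioi_mem_nhds (by linarith)
      refine Filter.eventually_of_mem hmem fun q hq => ?_
      have hq' : -(Hbar i j) < q := hq
      show F (M 0) ≤ F (M q)
      rw [hM0]
      exact hkey q (by linarith)
    exact hloc.hasDerivAt_eq_zero hd
end

section
/- If H̄ ∈ ℝ^{n×r}, H̄ ≥ 0, is not a stationary point of min_{H≥0} F(H) for a continuously differentiable F, then there exist an index (i,j), a real p ≠ 0, and ε > 0 such that H̄ + p·E^{ij} ≥ 0 and F(H̄ + p·E^{ij}) ≤ F(H̄) − ε. -/
open BigOperators Finset

lemma slope_aux {g : ℝ → ℝ} {d : ℝ} (hg : HasDerivAt g d 0) (hd : d < 0)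
    {δ : ℝ} (hδ : 0 < δ) :
    ∃ t, 0 < t ∧ t < δ ∧ g t ≤ g 0 + t * (d / 2) := by
  have hslope := hasDerivAt_iff_tendsto_slope.mp hg
  have h1 : ∀ᶠ t in nhdsWithin (0:ℝ) {(0:ℝ)}ᶜ, slope g 0 t < d / 2 :=
    (tendsto_order.mp hslope).2 (d / 2) (by linarith)
  have hmono : nhdsWithin (0:ℝ) (Set.Ioi 0) ≤ nhdsWithin (0:ℝ) {(0:ℝ)}ᶜ :=
    nhdsWithin_mono 0 (fun x hx => ne_of_gt hx)
  have h2 : ∀ᶠ t in nhdsWithin (0:ℝ) (Set.Ioi 0), slope g 0 t < d / 2 := h1.filter_mono hmono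
  have h3 : ∀ᶠ t in nhdsWithin (0:ℝ) (Set.Ioi 0), t < δ :=
    eventually_nhdsWithin_of_eventually_nhds (Filter.tendsto_id.eventually_lt_const hδ)
  have h4 : ∀ᶠ t in nhdsWithin (0:ℝ) (Set.Ioi 0), (0:ℝ) < t :=
    eventually_mem_nhdsWithin.mono (fun x hx => hx)
  obtain ⟨t, ⟨hst, htδ⟩, ht0⟩ := ((h2.and h3).and h4).exists
  refine ⟨t, ht0, htδ, ?_⟩
  have : (g t - g 0) / t < d / 2 := by simpa [slope_def_field, div_eq_iff ht0.ne'] using hst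
  nlinarith [(div_lt_iff₀ ht0).mp this]

lemma key_aux {n r : ℕ} (F : (Fin n → Fin r → ℝ) → ℝ) (hF : ContDiff ℝ 1 F)
    (Hbar e : Fin n → Fin r → ℝ) (hd : fderiv ℝ F Hbar e < 0) {δ : ℝ} (hδ : 0 < δ) :
    ∃ t ε, 0 < t ∧ t < δ ∧ 0 < ε ∧ F (Hbar + t • e) ≤ F Hbar - ε := by
  set d := fderiv ℝ F Hbar e with hdd
  have hline : HasDerivAt (fun t : ℝ => Hbar + t • e) e 0 := by
    simpa using ((hasDerivAt_id (0:ℝ)).smul_const e).const_add Hbar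
  have hFd : HasFDerivAt F (fderiv ℝ F Hbar) (Hbar + (0:ℝ) • e) := by
    simpa using ((hF.differentiable one_ne_zero) Hbar).hasFDerivAt
  have hg : HasDerivAt (fun t : ℝ => F (Hbar + t • e)) d 0 := hFd.comp_hasDerivAt 0 hline
  obtain ⟨t, ht0, htδ, hle⟩ := slope_aux hg hd hδ
  refine ⟨t, t * (-d / 2), ht0, htδ, by nlinarith, ?_⟩
  have h0 : F (Hbar + (0:ℝ) • e) = F Hbar := by simp
  calc F (Hbar + t • e) ≤ F (Hbar + (0:ℝ) • e) + t * (d / 2) := hle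
    _ = F Hbar - t * (-d / 2) := by rw [h0]; ring

/-- If H̄ ≥ 0 is not a stationary point of min_{H≥0} F(H) for continuously
    differentiable F, then some single-coordinate feasible perturbation decreases
    F by a fixed ε > 0. -/
theorem stmt13 {n r : ℕ} (F : (Fin n → Fin r → ℝ) → ℝ) (hF : ContDiff ℝ 1 F)
    (Hbar : Fin n → Fin r → ℝ) (hnn : ∀ i j, 0 ≤ Hbar i j)
    (hnotstat :
      ¬ (∀ i j,
        (Hbar i j = 0 →
          0 ≤ fderiv ℝ F Hbar (fun a b => if a = i ∧ b = j then (1 : ℝ) else 0)) ∧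
        (0 < Hbar i j →
          fderiv ℝ F Hbar (fun a b => if a = i ∧ b = j then (1 : ℝ) else 0) = 0))) :
    ∃ (i : Fin n) (j : Fin r) (p ε : ℝ), p ≠ 0 ∧ 0 < ε ∧
      (∀ a b, 0 ≤ Hbar a b + (if a = i ∧ b = j then p else 0)) ∧
      F (fun a b => Hbar a b + (if a = i ∧ b = j then p else 0)) ≤ F Hbar - ε := by
  obtain ⟨i, hi⟩ := not_forall.mp hnotstat
  obtain ⟨j, hij⟩ := not_forall.mp hi
  set e : Fin n → Fin r → ℝ := fun a b => if a = i ∧ b = j then (1 : ℝ) else 0 with he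
  set d := fderiv ℝ F Hbar e with hdd
  -- derive the sign information
  have hcase : (Hbar i j = 0 ∧ d < 0) ∨ (0 < Hbar i j ∧ d ≠ 0) := by
    by_cases hz : Hbar i j = 0
    · left
      refine ⟨hz, ?_⟩
      by_contra hd'
      exact hij ⟨fun _ => not_lt.mp hd', fun hpos => absurd hpos (by rw [hz]; exact lt_irrefl 0)⟩
    · right
      have hpos : 0 < Hbar i j := lt_of_le_of_ne (hnn i j) (Ne.symm hz)
      refine ⟨hpos, fun hd0 => hij ⟨fun _ => hd0 ▸ le_rfl, fun _ => hd0⟩⟩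
  rcases hcase with ⟨hz, hd⟩ | ⟨hpos, hd0⟩
  · -- Hbar i j = 0, d < 0 : move in direction +e
    obtain ⟨t, ε, ht0, _, hε, hle⟩ := key_aux F hF Hbar e hd one_pos
    refine ⟨i, j, t, ε, ht0.ne', hε, ?_, ?_⟩
    · intro a b
      have := hnn a b
      split <;> [linarith; linarith]
    · have heq : (fun a b => Hbar a b + (if a = i ∧ b = j then t else 0)) = Hbar + t • e := by
        funext a b
        simp only [Pi.add_apply, Pi.smul_apply, smul_eq_mul, he]
        split <;> ring
      rw [heq]; exact hle
  · rcases lt_or_gt_of_ne hd0 with hd | hd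
    · -- d < 0 : same as above
      obtain ⟨t, ε, ht0, _, hε, hle⟩ := key_aux F hF Hbar e hd one_pos
      refine ⟨i, j, t, ε, ht0.ne', hε, ?_, ?_⟩
      · intro a b
        have := hnn a b
        split <;> [linarith; linarith]
      · have heq : (fun a b => Hbar a b + (if a = i ∧ b = j then t else 0)) = Hbar + t • e := by
          funext a b
          simp only [Pi.add_apply, Pi.smul_apply, smul_eq_mul, he]
          split <;> ring
        rw [heq]; exact hle
    · -- d > 0 : move in direction -e, with δ = Hbar i j
      have hd' : fderiv ℝ F Hbar (-e) < 0 := by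
        rw [map_neg]; linarith
      obtain ⟨t, ε, ht0, htδ, hε, hle⟩ := key_aux F hF Hbar (-e) hd' hpos
      refine ⟨i, j, -t, ε, by linarith, hε, ?_, ?_⟩
      · intro a b
        split
        · next hab =>
            obtain ⟨ha, hb⟩ := hab
            subst ha; subst hb; linarith
        · have := hnn a b; linarith
      · have heq : (fun a b => Hbar a b + (if a = i ∧ b = j then -t else 0)) = Hbar + t • (-e) := by
          funext a b
          simp only [Pi.add_apply, Pi.smul_apply, Pi.neg_apply, smul_eq_mul, he]
          split <;> ring
        rw [heq]; exact hle
end
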